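/- Let M > 1, let x ∈ [1/M, M] be real, and let z be a complex number with |z| < (M+1)/(M-1). Then 2 + (z+1)·(x-1) ≠ 0 whenever x ≠ 1, and the complex absolute value |(x-1)/(2+(z+1)(x-1))| is at most 1/((M+1)/(M-1) - |z|). -/

import Mathlib

/-- Modulus bound for the generating function `φ₁` with `a = 1` (Corollary 2.1):
for `M > 1`, `x ∈ [1/M, M]` and `z : ℂ` with `|z| < (M+1)/(M-1)`, the denominator
`2 + (z+1)(x-1)` is nonzero whenever `x ≠ 1` and
`|(x-1)/(2+(z+1)(x-1))| ≤ 1/((M+1)/(M-1) - |z|)`. -/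
theorem modulus_bound_example1 (M x : ℝ) (z : ℂ) (hM : 1 < M)
    (hx : x ∈ Set.Icc (1 / M) M) (hz : ‖z‖ < (M + 1) / (M - 1)) :
    (x ≠ 1 → (2 + (z + 1) * ((x : ℂ) - 1)) ≠ 0) ∧
    ‖((x : ℂ) - 1) / (2 + (z + 1) * ((x : ℂ) - 1))‖
      ≤ 1 / ((M + 1) / (M - 1) - ‖z‖) := by
  obtain ⟨hx1, hx2⟩ := hx
  have hM1 : (0:ℝ) < M - 1 := by linarith
  have hrz : 0 < (M + 1) / (M - 1) - ‖z‖ := by linarith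
  have hMpos : (0:ℝ) < M := by linarith
  have hxpos : 0 < x := lt_of_lt_of_le (by positivity) hx1
  by_cases hx1' : x = 1
  · subst hx1'
    refine ⟨fun h => absurd rfl h, ?_⟩
    simp only [Complex.ofReal_one, sub_self, zero_div, norm_zero]
    exact (one_div_pos.mpr hrz).le
  · have hMx : 1 ≤ M * x := by
      rw [div_le_iff₀ hMpos] at hx1; linarith [hx1]
    have hkey : (M + 1) / (M - 1) ≤ (x + 1) / |x - 1| := by
      rcases lt_or_gt_of_ne hx1' with h | h
      · rw [abs_of_neg (by linarith), div_le_div_iff₀ hM1 (by linarith)]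
        nlinarith
      · rw [abs_of_pos (by linarith), div_le_div_iff₀ hM1 (by linarith)]
        nlinarith
    have hxc : (x:ℂ) - 1 ≠ 0 := sub_ne_zero.mpr (by exact_mod_cast hx1')
    set w : ℂ := ((x:ℂ) + 1) / ((x:ℂ) - 1) + z with hw
    have h1 : ‖((x:ℂ) + 1) / ((x:ℂ) - 1)‖ = (x + 1) / |x - 1| := by
      rw [show ((x:ℂ) + 1) = ((x + 1 : ℝ) : ℂ) by push_cast; ring,
        show ((x:ℂ) - 1) = ((x - 1 : ℝ) : ℂ) by push_cast; ring,
        norm_div, Complex.norm_real, Complex.norm_real, Real.norm_eq_abs, Real.norm_eq_abs, abs_of_pos (by linarith)]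
    have habsw : (M + 1) / (M - 1) - ‖z‖ ≤ ‖w‖ := by
      have htri := norm_add_le w (-z)
      have hwz : w + (-z) = ((x:ℂ) + 1) / ((x:ℂ) - 1) := by rw [hw]; ring
      rw [hwz, norm_neg] at htri
      rw [h1] at htri
      linarith
    have hw0 : w ≠ 0 := by
      intro h
      rw [h, norm_zero] at habsw
      linarith
    have hden : 2 + (z + 1) * ((x:ℂ) - 1) = ((x:ℂ) - 1) * w := by
      rw [hw]; field_simp; ring
    refine ⟨fun _ => by rw [hden]; exact mul_ne_zero hxc hw0, ?_⟩
    rw [hden, div_mul_cancel_left₀ hxc w, norm_inv]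
    rw [one_div]
    exact inv_anti₀ hrz habsw
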